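/- Let a, c, a', c' ∈ ℝ² with (a,c) ≠ (a',c') and dist(a,c) = dist(a',c') = δ ≠ 0. Then there exist curves C₁, C₂ ⊂ ℝ², which are either two concentric circles or two parallel lines, such that a, a' ∈ C₁, c, c' ∈ C₂, and S_{ac} ∩ S_{a'c'} ⊆ {(b,d) ∈ ℝ²×ℝ² : b ∈ C₁, d ∈ C₂, dist(b,d) = δ}. -/

import Mathlib

noncomputable section

abbrev Plane := EuclideanSpace ℝ (Fin 2)

def bisector (a b : Plane) : Set Plane := {x | dist x a = dist x b}

def bisectorSurface (a c : Plane) : Set (Plane × Plane) :=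
  {bd | bd.1 ≠ a ∧ bd.2 ≠ c ∧ bisector a bd.1 = bisector c bd.2}

open ComplexConjugate

lemma dist_iff' (a b x : ℂ) : dist x a = dist x b ↔
    (conj (b - a) * x).re * 2 = Complex.normSq b - Complex.normSq a := by
  rw [Complex.dist_eq, Complex.dist_eq, Complex.norm_def, Complex.norm_def,
    Real.sqrt_inj (Complex.normSq_nonneg _) (Complex.normSq_nonneg _)]
  have key : Complex.normSq (x - a) - Complex.normSq (x - b) =
      (conj (b - a) * x).re * 2 - (Complex.normSq b - Complex.normSq a) := by
    simp [Complex.normSq_apply, Complex.mul_re, Complex.sub_re, Complex.sub_im,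
      Complex.conj_re, Complex.conj_im]
    ring
  constructor <;> intro h <;> linarith [key]

lemma refl_of_bisector {a b c d : ℂ} (hb : b ≠ a) (hd : d ≠ c)
    (heq : ∀ x : ℂ, dist x a = dist x b ↔ dist x c = dist x d) :
    ∃ u w : ℂ, ‖u‖ = 1 ∧ u * conj w = -w ∧ b = u * conj a + w ∧ d = u * conj c + w := by
  have hba : b - a ≠ 0 := sub_ne_zero.mpr hb
  have hdc : d - c ≠ 0 := sub_ne_zero.mpr hd
  set p : ℂ := conj (b - a) with hp_def
  set q : ℂ := conj (d - c) with hq_def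
  have hp : p ≠ 0 := by simp only [hp_def, ne_eq, map_eq_zero]; exact hba
  have hq : q ≠ 0 := by simp only [hq_def, ne_eq, map_eq_zero]; exact hdc
  have hnp : (Complex.normSq p : ℂ) ≠ 0 :=
    Complex.ofReal_ne_zero.mpr (ne_of_gt (Complex.normSq_pos.mpr hp))
  have H : ∀ x : ℂ, (p * x).re * 2 = Complex.normSq b - Complex.normSq a ↔
      (q * x).re * 2 = Complex.normSq d - Complex.normSq c := by
    intro x
    rw [← dist_iff', ← dist_iff']
    exact heq x
  set s : ℝ := (Complex.normSq b - Complex.normSq a) / 2 with hs_def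
  set x₀ : ℂ := (s : ℂ) * conj p / (Complex.normSq p : ℂ) with hx0_def
  have hpx0 : p * x₀ = (s : ℂ) := by
    rw [hx0_def]
    field_simp
    rw [show p * (s:ℂ) * conj p = (s:ℂ) * (p * conj p) by ring, Complex.mul_conj]
  have h0 : (p * x₀).re * 2 = Complex.normSq b - Complex.normSq a := by
    rw [hpx0, Complex.ofReal_re, hs_def]; ring
  set x₁ : ℂ := x₀ + Complex.I * conj p with hx1_def
  have hpx1 : p * x₁ = (s : ℂ) + Complex.I * (Complex.normSq p : ℂ) := by
    rw [hx1_def, mul_add, hpx0]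
    congr 1
    rw [show p * (Complex.I * conj p) = Complex.I * (p * conj p) by ring, Complex.mul_conj]
  have h1 : (p * x₁).re * 2 = Complex.normSq b - Complex.normSq a := by
    rw [hpx1]
    simp [hs_def]
  have hq0 : (q * x₀).re * 2 = Complex.normSq d - Complex.normSq c := (H x₀).mp h0
  have hq1 : (q * x₁).re * 2 = Complex.normSq d - Complex.normSq c := (H x₁).mp h1
  -- deduce (q * (I * conj p)).re = 0
  have hsplit : q * x₁ = q * x₀ + q * (Complex.I * conj p) := by rw [hx1_def]; ring
  have hzero : (q * (Complex.I * conj p)).re = 0 := by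
    have := congrArg Complex.re hsplit
    rw [Complex.add_re] at this
    linarith
  -- so (q * conj p).im = 0
  have him : (q * conj p).im = 0 := by
    rw [show q * (Complex.I * conj p) = Complex.I * (q * conj p) by ring] at hzero
    simp only [Complex.mul_re, Complex.I_re, Complex.I_im] at hzero
    linarith
  set μ : ℝ := (q * conj p).re with hμ_def
  have hqp : q * conj p = (μ : ℂ) := by
    apply Complex.ext
    · simp [hμ_def]
    · simp [him]
  set lam : ℝ := μ / Complex.normSq p with hlam_def
  have hq_eq : q = (lam : ℂ) * p := by
    have h2 : q * ((Complex.normSq p : ℝ) : ℂ) = (μ : ℂ) * p := by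
      rw [← Complex.mul_conj p, show q * (p * conj p) = q * conj p * p by ring, hqp]
    rw [hlam_def]
    push_cast
    field_simp at h2 ⊢
    linear_combination h2
  have hlam0 : lam ≠ 0 := by
    intro h
    rw [h] at hq_eq
    simp at hq_eq
    exact hq (by simpa using hq_eq)
  -- scalar equation
  have hscal : Complex.normSq d - Complex.normSq c = lam * (Complex.normSq b - Complex.normSq a) := by
    have : (q * x₀).re = lam * s := by
      rw [hq_eq]
      have : (lam : ℂ) * p * x₀ = (lam : ℂ) * (s:ℂ) := by rw [mul_assoc, hpx0]
      rw [this, ← Complex.ofReal_mul, Complex.ofReal_re]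
    rw [← hq0, this, hs_def]; ring
  -- d - c = lam * (b - a)
  have hdc_eq : d - c = (lam : ℂ) * (b - a) := by
    have := congrArg conj hq_eq
    rw [hq_def, hp_def] at this
    simpa [Complex.conj_conj, map_mul, Complex.conj_ofReal] using this
  -- now build the reflection
  set e : ℂ := b - a with he_def
  set u : ℂ := -(e / conj e) with hu_def
  set w : ℂ := b - u * conj a with hw_def
  have hce : conj e ≠ 0 := by rw [← hp_def]; exact hp
  have habs_u : ‖u‖ = 1 := by
    rw [hu_def]
    rw [norm_neg, norm_div, Complex.norm_conj]
    exact div_self (norm_ne_zero_iff.mpr hba)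
  have hu_key : u * conj e = -e := by
    rw [hu_def]; field_simp
  have huu : u * conj u = 1 := by
    rw [Complex.mul_conj]
    norm_cast
    rw [Complex.normSq_eq_norm_sq, habs_u]; norm_num
  have hcc : conj (conj (a : ℂ)) = a := Complex.conj_conj a
  have hinv : u * conj w = -w := by
    have hcw : conj w = conj b - conj u * a := by
      rw [hw_def, map_sub, map_mul, Complex.conj_conj]
    rw [hcw, hw_def]
    have hke : u * (conj b - conj a) = -(b - a) := by
      rw [← hu_key, he_def, map_sub]
    linear_combination (-a) * huu + hke
  have hb_eq : b = u * conj a + w := by rw [hw_def]; ring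
  refine ⟨u, w, habs_u, hinv, hb_eq, ?_⟩
  -- key real identity K
  have hNe : Complex.normSq e ≠ 0 := by
    simpa [he_def] using (ne_of_gt (Complex.normSq_pos.mpr hba))
  have hK : ((c - a) * conj e).re * 2 = (1 - lam) * Complex.normSq e := by
    -- from hscal and hdc_eq
    have hd_eq : d = c + (lam : ℂ) * e := by rw [he_def]; linear_combination hdc_eq
    have hnd : Complex.normSq d = Complex.normSq c + lam^2 * Complex.normSq e
        + 2 * lam * (c * conj e).re := by
      rw [hd_eq, Complex.normSq_add]
      rw [Complex.normSq_mul, Complex.normSq_ofReal]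
      rw [show c * conj ((lam:ℂ) * e) = (lam:ℂ) * (c * conj e) by rw [map_mul, Complex.conj_ofReal]; ring]
      rw [Complex.re_ofReal_mul]
      ring
    have hnb : Complex.normSq b = Complex.normSq a + Complex.normSq e
        + 2 * (a * conj e).re := by
      have hb' : b = a + e := by rw [he_def]; ring
      rw [hb', Complex.normSq_add]
    have hdiv : 2 * (c * conj e).re + lam * Complex.normSq e
        = 2 * (a * conj e).re + Complex.normSq e := by
      have hmul : lam * (2 * (c * conj e).re + lam * Complex.normSq e)
          = lam * (2 * (a * conj e).re + Complex.normSq e) := by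
        rw [hnd, hnb] at hscal; ring_nf; ring_nf at hscal; linarith
      exact mul_left_cancel₀ hlam0 hmul
    have : (c - a) * conj e = c * conj e - a * conj e := by ring
    rw [this, Complex.sub_re]
    linarith
  -- final identity
  have hcce : conj b - conj a = conj e := by rw [he_def, map_sub]
  have hK' : (c - a) * conj e + (conj c - conj a) * e
      = (1 - (lam:ℂ)) * (e * conj e) := by
    have h1 : (c - a) * conj e + conj ((c - a) * conj e)
        = ((((c - a) * conj e).re * 2 : ℝ) : ℂ) := by
      rw [Complex.add_conj]; push_cast; ring
    rw [show conj ((c - a) * conj e) = (conj c - conj a) * e by rw [map_mul, map_sub, Complex.conj_conj]] at h1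
    rw [h1, hK, Complex.mul_conj]
    push_cast; ring
  have hd_eq : d = c + (lam : ℂ) * e := by rw [he_def]; linear_combination hdc_eq
  apply mul_right_cancel₀ hce
  rw [hd_eq, hw_def]
  linear_combination hK' - (conj c - conj a) * hu_key + conj e * he_def

lemma pointFacts (A C A' C' B D : ℂ)
    (hAC : A - C ≠ 0)
    (hB : B ≠ A) (hD : D ≠ C) (hB' : B ≠ A') (hD' : D ≠ C')
    (h : ∀ x : ℂ, dist x A = dist x B ↔ dist x C = dist x D)
    (h' : ∀ x : ℂ, dist x A' = dist x B ↔ dist x C' = dist x D) :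
    dist B D = dist A C ∧
    (∀ ρ o : ℂ, ρ = (A' - C') / (A - C) → ρ ≠ 1 → o = (A' - ρ * A) / (1 - ρ) →
      dist B o = dist A o ∧ dist D o = dist C o) ∧
    ((A' - C') / (A - C) = 1 →
      (conj (Complex.I * (A' - A)) * B).re = (conj (Complex.I * (A' - A)) * A).re ∧
      (conj (Complex.I * (A' - A)) * D).re = (conj (Complex.I * (A' - A)) * C).re) := by
  obtain ⟨u, w, hu1, hw, hBdef, hDdef⟩ := refl_of_bisector hB hD h
  obtain ⟨u', w', hu'1, hw', hBdef', hDdef'⟩ := refl_of_bisector hB' hD' h'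
  have hu0 : u ≠ 0 := by intro h0; rw [h0] at hu1; simp at hu1
  have hu'0 : u' ≠ 0 := by intro h0; rw [h0] at hu'1; simp at hu'1
  have huu : u * conj u = 1 := by
    rw [Complex.mul_conj]; norm_cast; rw [Complex.normSq_eq_norm_sq, hu1]; norm_num
  have hu'u' : u' * conj u' = 1 := by
    rw [Complex.mul_conj]; norm_cast; rw [Complex.normSq_eq_norm_sq, hu'1]; norm_num
  have hBD : B - D = u * conj (A - C) := by
    rw [hBdef, hDdef, map_sub]; ring
  have hBD' : B - D = u' * conj (A' - C') := by
    rw [hBdef', hDdef', map_sub]; ring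
  have hdistBD : dist B D = dist A C := by
    rw [Complex.dist_eq, Complex.dist_eq, hBD, norm_mul, Complex.norm_conj, hu1, one_mul]
  have hE : u * conj (A - C) = u' * conj (A' - C') := by rw [← hBD, ← hBD']
  have hρ0 : u' * conj u * (A - C) = A' - C' := by
    have hcE := congrArg conj hE
    rw [map_mul, map_mul, Complex.conj_conj, Complex.conj_conj] at hcE
    calc u' * conj u * (A - C) = u' * (conj u * (A - C)) := by ring
      _ = u' * (conj u' * (A' - C')) := by rw [hcE]
      _ = (u' * conj u') * (A' - C') := by ring
      _ = A' - C' := by rw [hu'u', one_mul]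
  have hcB : conj B = conj u * A + conj w := by
    rw [hBdef]; simp [map_add, map_mul]
  have hA' : A' = u' * conj u * A + (u' * conj w + w') := by
    have h1 : u' * conj B + w' = A' := by
      rw [hBdef']
      simp only [map_add, map_mul, Complex.conj_conj]
      linear_combination A' * hu'u' + hw'
    rw [← h1, hcB]; ring
  have hC' : C' = u' * conj u * C + (u' * conj w + w') := by
    have h1 : A' - C' = u' * conj u * (A - C) := hρ0.symm
    linear_combination hA' - h1
  refine ⟨hdistBD, ?_, ?_⟩
  · -- rotation case
    rintro ρ o hρdef hρ1 hodef
    have hρu : u' * conj u = ρ := by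
      rw [hρdef]
      field_simp
      exact hρ0
    have hcρ : conj ρ ≠ 1 := by
      intro hcontr
      apply hρ1
      have := congrArg conj hcontr
      simpa using this
    have h1ρ : (1:ℂ) - ρ ≠ 0 := sub_ne_zero.mpr (Ne.symm hρ1)
    have hτ : A' - ρ * A = u' * conj w + w' := by rw [← hρu]; linear_combination hA'
    have ho : o = (u' * conj w + w') / (1 - ρ) := by rw [hodef, hτ]
    have hcρ2 : conj ρ = conj u' * u := by rw [← hρu, map_mul, Complex.conj_conj]
    have hP : o * (1 - ρ) = u' * conj w + w' := by
      rw [ho]; field_simp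
    have hcP : conj o * (1 - conj ρ) = conj u' * w + conj w' := by
      have h6 := congrArg conj hP
      simpa only [map_mul, map_sub, map_one, map_add, Complex.conj_conj] using h6
    have hprod : (1 - ρ) * (1 - conj ρ) ≠ 0 :=
      mul_ne_zero h1ρ (sub_ne_zero.mpr (Ne.symm hcρ))
    have hfix : u * conj o + w = o := by
      apply mul_right_cancel₀ hprod
      have e1 : (u * conj o + w) * ((1 - ρ) * (1 - conj ρ))
          = u * (conj o * (1 - conj ρ)) * (1 - ρ) + w * ((1 - ρ) * (1 - conj ρ)) := by ring
      have e2 : o * ((1 - ρ) * (1 - conj ρ)) = (o * (1 - ρ)) * (1 - conj ρ) := by ring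
      rw [e1, e2, hcP, hP, hcρ2, ← hρu]
      linear_combination (u' * conj w - u' * conj w') * huu + (u * conj w - u * conj w') * hu'u'
        + (1 - u' * conj u) * hw + (u * conj u' - 1) * hw'
    have hBo : B - o = u * conj (A - o) := by
      rw [hBdef, map_sub]
      linear_combination hfix
    have hDo : D - o = u * conj (C - o) := by
      rw [hDdef, map_sub]
      linear_combination hfix
    constructor
    · rw [Complex.dist_eq, Complex.dist_eq, hBo, norm_mul, Complex.norm_conj, hu1, one_mul]
    · rw [Complex.dist_eq, Complex.dist_eq, hDo, norm_mul, Complex.norm_conj, hu1, one_mul]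
  · -- translation case
    intro hρ1
    have hρu1 : u' * conj u = 1 := by
      have hACeq : A' - C' = A - C := by
        field_simp at hρ1
        exact hρ1
      rw [hACeq] at hρ0
      exact mul_right_cancel₀ hAC (by rw [hρ0, one_mul])
    have huu' : u' = u := by
      calc u' = u' * (conj u * u) := by
              rw [show conj u * u = u * conj u by ring, huu, mul_one]
        _ = (u' * conj u) * u := by ring
        _ = u := by rw [hρu1, one_mul]
    set τ : ℂ := A' - A with hτ_def
    have hτ0 : τ = u' * conj w + w' := by
      rw [hτ_def]
      have h2 := hA'
      rw [hρu1, one_mul] at h2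
      linear_combination h2
    have hw'2 : u * conj w' = -w' := by rw [← huu']; exact hw'
    have hτW : u * conj τ = -τ := by
      rw [hτ0, huu']
      simp only [map_add, map_mul, Complex.conj_conj]
      linear_combination w * huu + hw'2 + hw
    have hBW : u * conj (B - A) = -(B - A) := by
      rw [hBdef]
      simp only [map_sub, map_add, map_mul, Complex.conj_conj]
      linear_combination A * huu + hw
    have hDW : u * conj (D - C) = -(D - C) := by
      rw [hDdef]
      simp only [map_sub, map_add, map_mul, Complex.conj_conj]
      linear_combination C * huu + hw
    have key : ∀ z : ℂ, u * conj z = -z → (conj (Complex.I * τ) * z).re = 0 := by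
      intro z hz
      have hreal : conj τ * z = τ * conj z := by
        apply mul_left_cancel₀ hu0
        calc u * (conj τ * z) = (u * conj τ) * z := by ring
          _ = -τ * z := by rw [hτW]
          _ = τ * -z := by ring
          _ = τ * (u * conj z) := by rw [hz]
          _ = u * (τ * conj z) := by ring
      have him : (conj τ * z).im = 0 := by
        have h3 : conj (conj τ * z) = conj τ * z := by
          rw [map_mul, Complex.conj_conj, hreal]
        exact Complex.conj_eq_iff_im.mp h3
      have h4 : conj (Complex.I * τ) * z = -(Complex.I * (conj τ * z)) := by
        rw [map_mul, Complex.conj_I]; ring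
      rw [h4]
      simp only [Complex.neg_re, Complex.mul_re, Complex.I_re, Complex.I_im, him]
      ring
    constructor
    · have h1 : (conj (Complex.I * τ) * (B - A)).re = 0 := key _ hBW
      have h5 : conj (Complex.I * τ) * B - conj (Complex.I * τ) * A
          = conj (Complex.I * τ) * (B - A) := by ring
      have h2 := congrArg Complex.re h5
      rw [Complex.sub_re, h1] at h2
      rw [hτ_def] at h2
      linarith
    · have h1 : (conj (Complex.I * τ) * (D - C)).re = 0 := key _ hDW
      have h5 : conj (Complex.I * τ) * D - conj (Complex.I * τ) * C
          = conj (Complex.I * τ) * (D - C) := by ring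
      have h2 := congrArg Complex.re h5
      rw [Complex.sub_re, h1] at h2
      rw [hτ_def] at h2
      linarith

/-- Intersection of two bisector surfaces: if `(a,c) ≠ (a',c')` and
`dist a c = dist a' c' = δ ≠ 0`, then there are two concentric circles or two parallel lines
`C₁, C₂` with `a, a' ∈ C₁`, `c, c' ∈ C₂`, and
`S_{ac} ∩ S_{a'c'} ⊆ {(b,d) : b ∈ C₁, d ∈ C₂, dist b d = δ}`. -/
theorem bisectorSurface_intersection (a c a' c' : Plane) (δ : ℝ)
    (hne : (a, c) ≠ (a', c')) (hδ : δ ≠ 0)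
    (h1 : dist a c = δ) (h2 : dist a' c' = δ) :
    ∃ C₁ C₂ : Set Plane,
      ((∃ o r₁ r₂, 0 < r₁ ∧ 0 < r₂ ∧ C₁ = Metric.sphere o r₁ ∧ C₂ = Metric.sphere o r₂) ∨
        (∃ (v : Plane) (t₁ t₂ : ℝ), v ≠ 0 ∧
          C₁ = {x | (inner ℝ v x : ℝ) = t₁} ∧ C₂ = {x | (inner ℝ v x : ℝ) = t₂})) ∧
      a ∈ C₁ ∧ a' ∈ C₁ ∧ c ∈ C₂ ∧ c' ∈ C₂ ∧
      bisectorSurface a c ∩ bisectorSurface a' c' ⊆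
        {bd : Plane × Plane | bd.1 ∈ C₁ ∧ bd.2 ∈ C₂ ∧ dist bd.1 bd.2 = δ} := by
  classical
  set e : ℂ ≃ₗᵢ[ℝ] EuclideanSpace ℝ (Fin 2) := Complex.orthonormalBasisOneI.repr with he_def
  set A : ℂ := e.symm a with hA_def
  set C : ℂ := e.symm c with hC_def
  set A' : ℂ := e.symm a' with hA'_def
  set C' : ℂ := e.symm c' with hC'_def
  have ha : e A = a := e.apply_symm_apply a
  have hc : e C = c := e.apply_symm_apply c
  have ha' : e A' = a' := e.apply_symm_apply a'
  have hc' : e C' = c' := e.apply_symm_apply c'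
  have hinner : ∀ z x : ℂ, (inner ℝ (e z) (e x) : ℝ) = (conj z * x).re := by
    intro z x
    rw [e.inner_map_map]
    rw [Complex.inner, mul_comm]
  have hdAC : dist A C = δ := by rw [← h1, ← ha, ← hc, e.dist_map]
  have hdA'C' : dist A' C' = δ := by rw [← h2, ← ha', ← hc', e.dist_map]
  have habsAC : ‖A - C‖ = δ := by rw [← Complex.dist_eq]; exact hdAC
  have habsA'C' : ‖A' - C'‖ = δ := by rw [← Complex.dist_eq]; exact hdA'C'
  have hAC : A - C ≠ 0 := by
    intro hh; rw [hh] at habsAC; simp at habsAC; exact hδ habsAC.symm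
  have hneC : ¬(A' = A ∧ C' = C) := by
    rintro ⟨hh1, hh2⟩
    apply hne
    rw [Prod.mk.injEq]
    constructor
    · rw [← ha, ← ha', hh1]
    · rw [← hc, ← hc', hh2]
  -- the per-point consequence
  have hsub : ∀ bd : (EuclideanSpace ℝ (Fin 2)) × (EuclideanSpace ℝ (Fin 2)),
      bd ∈ bisectorSurface a c ∩ bisectorSurface a' c' →
      (dist (e.symm bd.1) (e.symm bd.2) = dist A C ∧
       (∀ ρ o : ℂ, ρ = (A' - C') / (A - C) → ρ ≠ 1 → o = (A' - ρ * A) / (1 - ρ) →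
          dist (e.symm bd.1) o = dist A o ∧ dist (e.symm bd.2) o = dist C o) ∧
       ((A' - C') / (A - C) = 1 →
          (conj (Complex.I * (A' - A)) * (e.symm bd.1)).re = (conj (Complex.I * (A' - A)) * A).re ∧
          (conj (Complex.I * (A' - A)) * (e.symm bd.2)).re = (conj (Complex.I * (A' - A)) * C).re)) := by
    rintro ⟨b, d⟩ ⟨⟨hb1, hd1, hbis⟩, ⟨hb1', hd1', hbis'⟩⟩
    have hB : e.symm b ≠ A := by
      intro hh; apply hb1
      rw [← e.apply_symm_apply b, hh, ha]
    have hD : e.symm d ≠ C := by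
      intro hh; apply hd1
      rw [← e.apply_symm_apply d, hh, hc]
    have hB' : e.symm b ≠ A' := by
      intro hh; apply hb1'
      rw [← e.apply_symm_apply b, hh, ha']
    have hD' : e.symm d ≠ C' := by
      intro hh; apply hd1'
      rw [← e.apply_symm_apply d, hh, hc']
    have h : ∀ x : ℂ, dist x A = dist x (e.symm b) ↔ dist x C = dist x (e.symm d) := by
      intro x
      have hx := Set.ext_iff.mp hbis (e x)
      simp only [bisector, Set.mem_setOf_eq] at hx
      rw [← ha, ← hc, ← e.apply_symm_apply b, ← e.apply_symm_apply d] at hx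
      simpa only [e.dist_map] using hx
    have h' : ∀ x : ℂ, dist x A' = dist x (e.symm b) ↔ dist x C' = dist x (e.symm d) := by
      intro x
      have hx := Set.ext_iff.mp hbis' (e x)
      simp only [bisector, Set.mem_setOf_eq] at hx
      rw [← ha', ← hc', ← e.apply_symm_apply b, ← e.apply_symm_apply d] at hx
      simpa only [e.dist_map] using hx
    exact pointFacts A C A' C' (e.symm b) (e.symm d) hAC hB hD hB' hD' h h'
  by_cases hρ1 : (A' - C') / (A - C) = 1
  · -- translation case
    have hACeq : A' - C' = A - C := by
      field_simp at hρ1; exact hρ1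
    set τ : ℂ := A' - A with hτ_def
    have hττ : C' - C = τ := by rw [hτ_def]; linear_combination -hACeq
    have hτ0 : τ ≠ 0 := by
      intro hh
      apply hneC
      constructor
      · rw [← sub_eq_zero]; rw [hτ_def] at hh; exact hh
      · rw [← sub_eq_zero]; rw [← hττ] at hh; exact hh
    set ν : ℂ := Complex.I * τ with hν_def
    have hν0 : ν ≠ 0 := mul_ne_zero Complex.I_ne_zero hτ0
    have hv0 : e ν ≠ 0 := by
      intro hh
      exact hν0 (by rwa [e.map_eq_zero_iff] at hh)
    have hτre : (conj ν * τ).re = 0 := by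
      rw [hν_def, map_mul, Complex.conj_I]
      rw [show -Complex.I * conj τ * τ = -(Complex.I * (τ * conj τ)) by ring, Complex.mul_conj]
      simp
    refine ⟨{x | (inner ℝ (e ν) x : ℝ) = (conj ν * A).re},
            {x | (inner ℝ (e ν) x : ℝ) = (conj ν * C).re},
            Or.inr ⟨e ν, (conj ν * A).re, (conj ν * C).re, hv0, rfl, rfl⟩, ?_, ?_, ?_, ?_, ?_⟩
    · show (inner ℝ (e ν) a : ℝ) = _
      rw [← ha, hinner]
    · show (inner ℝ (e ν) a' : ℝ) = _
      rw [← ha', hinner]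
      have hsplit : conj ν * A' - conj ν * A = conj ν * τ := by rw [hτ_def]; ring
      have := congrArg Complex.re hsplit
      rw [Complex.sub_re, hτre] at this
      linarith
    · show (inner ℝ (e ν) c : ℝ) = _
      rw [← hc, hinner]
    · show (inner ℝ (e ν) c' : ℝ) = _
      rw [← hc', hinner]
      have hsplit : conj ν * C' - conj ν * C = conj ν * τ := by rw [← hττ]; ring
      have := congrArg Complex.re hsplit
      rw [Complex.sub_re, hτre] at this
      linarith
    · rintro ⟨b, d⟩ hmem
      obtain ⟨hBD, _, hline⟩ := hsub ⟨b, d⟩ hmem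
      obtain ⟨k1, k2⟩ := hline hρ1
      refine ⟨?_, ?_, ?_⟩
      · show (inner ℝ (e ν) b : ℝ) = _
        rw [← e.apply_symm_apply b, hinner]
        rw [hν_def, hτ_def]
        exact k1
      · show (inner ℝ (e ν) d : ℝ) = _
        rw [← e.apply_symm_apply d, hinner]
        rw [hν_def, hτ_def]
        exact k2
      · show dist b d = δ
        rw [← e.apply_symm_apply b, ← e.apply_symm_apply d, e.dist_map, hBD, hdAC]
  · -- rotation case
    set ρ : ℂ := (A' - C') / (A - C) with hρ_def
    have h1ρ : (1:ℂ) - ρ ≠ 0 := sub_ne_zero.mpr (Ne.symm hρ1)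
    have habsρ : ‖ρ‖ = 1 := by
      rw [hρ_def, norm_div, habsA'C', habsAC, div_self hδ]
    set o : ℂ := (A' - ρ * A) / (1 - ρ) with ho_def
    have hρAC : ρ * (A - C) = A' - C' := by
      rw [hρ_def]; field_simp
    have hA'o : A' - o = ρ * (A - o) := by
      rw [ho_def]; field_simp; ring
    have hC'o : C' - o = ρ * (C - o) := by
      linear_combination hA'o + hρAC
    have hdA'o : dist A' o = dist A o := by
      rw [Complex.dist_eq, Complex.dist_eq, hA'o, norm_mul, habsρ, one_mul]
    have hdC'o : dist C' o = dist C o := by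
      rw [Complex.dist_eq, Complex.dist_eq, hC'o, norm_mul, habsρ, one_mul]
    by_cases hoA : o = A
    · -- degenerate : A' = A, intersection is empty
      have hA'A : A' = A := by
        have := hA'o
        rw [hoA] at this
        simpa [sub_eq_zero] using this
      have hC'C : C' ≠ C := fun hh => hneC ⟨hA'A, hh⟩
      have hCC' : C' - C ≠ 0 := sub_ne_zero.mpr hC'C
      have hex : ∃ o₂ : ℂ, o₂ ≠ A ∧ dist C o₂ = dist C' o₂ := by
        by_cases hm : (C + C') / 2 = A
        · refine ⟨(C + C') / 2 + Complex.I * (C' - C), ?_, ?_⟩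
          · intro hh
            rw [← hm] at hh
            have : Complex.I * (C' - C) = 0 := by linear_combination hh
            exact hCC' (by simpa [Complex.I_ne_zero] using this)
          · have z1 : C - ((C + C') / 2 + Complex.I * (C' - C))
                = (C' - C) * (-(1/2) - Complex.I) := by ring
            have z2 : C' - ((C + C') / 2 + Complex.I * (C' - C))
                = (C' - C) * (1/2 - Complex.I) := by ring
            rw [Complex.dist_eq, Complex.dist_eq, z1, z2, norm_mul, norm_mul]
            congr 1
            rw [Complex.norm_def, Complex.norm_def]
            norm_num [Complex.normSq_apply]
        · refine ⟨(C + C') / 2, hm, ?_⟩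
          have z1 : C - (C + C') / 2 = -(C' - (C + C') / 2) := by ring
          rw [Complex.dist_eq, Complex.dist_eq, z1, norm_neg]
      obtain ⟨o₂, ho₂A, ho₂CC'⟩ := hex
      have hCo₂ : C ≠ o₂ := by
        intro hh
        rw [← hh] at ho₂CC'
        simp only [dist_self] at ho₂CC'
        exact hC'C (dist_eq_zero.mp ho₂CC'.symm)
      refine ⟨Metric.sphere (e o₂) (dist A o₂), Metric.sphere (e o₂) (dist C o₂),
        Or.inl ⟨e o₂, dist A o₂, dist C o₂, dist_pos.mpr (fun hh => ho₂A hh.symm),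
          dist_pos.mpr hCo₂, rfl, rfl⟩, ?_, ?_, ?_, ?_, ?_⟩
      · show a ∈ _
        rw [Metric.mem_sphere, ← ha, e.dist_map]
      · show a' ∈ _
        rw [Metric.mem_sphere, ← ha', e.dist_map, hA'A]
      · show c ∈ _
        rw [Metric.mem_sphere, ← hc, e.dist_map]
      · show c' ∈ _
        rw [Metric.mem_sphere, ← hc', e.dist_map]
        exact ho₂CC'.symm
      · rintro ⟨b, d⟩ hmem
        exfalso
        obtain ⟨-, hrot, -⟩ := hsub ⟨b, d⟩ hmem
        obtain ⟨k1, -⟩ := hrot ρ o rfl hρ1 ho_def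
        rw [hoA] at k1
        simp only [dist_self] at k1
        have hba : e.symm b = A := dist_eq_zero.mp k1
        exact hmem.1.1 (by rw [← e.apply_symm_apply b, hba, ha])
    · by_cases hoC : o = C
      · -- degenerate : C' = C, intersection is empty
        have hC'C : C' = C := by
          have := hC'o
          rw [hoC] at this
          simpa [sub_eq_zero] using this
        have hA'A : A' ≠ A := fun hh => hneC ⟨hh, hC'C⟩
        have hAA' : A' - A ≠ 0 := sub_ne_zero.mpr hA'A
        have hex : ∃ o₂ : ℂ, o₂ ≠ C ∧ dist A o₂ = dist A' o₂ := by
          by_cases hm : (A + A') / 2 = C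
          · refine ⟨(A + A') / 2 + Complex.I * (A' - A), ?_, ?_⟩
            · intro hh
              rw [← hm] at hh
              have : Complex.I * (A' - A) = 0 := by linear_combination hh
              exact hAA' (by simpa [Complex.I_ne_zero] using this)
            · have z1 : A - ((A + A') / 2 + Complex.I * (A' - A))
                  = (A' - A) * (-(1/2) - Complex.I) := by ring
              have z2 : A' - ((A + A') / 2 + Complex.I * (A' - A))
                  = (A' - A) * (1/2 - Complex.I) := by ring
              rw [Complex.dist_eq, Complex.dist_eq, z1, z2, norm_mul, norm_mul]
              congr 1
              rw [Complex.norm_def, Complex.norm_def]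
              norm_num [Complex.normSq_apply]
          · refine ⟨(A + A') / 2, hm, ?_⟩
            have z1 : A - (A + A') / 2 = -(A' - (A + A') / 2) := by ring
            rw [Complex.dist_eq, Complex.dist_eq, z1, norm_neg]
        obtain ⟨o₂, ho₂C, ho₂AA'⟩ := hex
        have hAo₂ : A ≠ o₂ := by
          intro hh
          rw [← hh] at ho₂AA'
          simp only [dist_self] at ho₂AA'
          exact hA'A (dist_eq_zero.mp ho₂AA'.symm)
        refine ⟨Metric.sphere (e o₂) (dist A o₂), Metric.sphere (e o₂) (dist C o₂),
          Or.inl ⟨e o₂, dist A o₂, dist C o₂, dist_pos.mpr hAo₂,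
            dist_pos.mpr (fun hh => ho₂C hh.symm), rfl, rfl⟩, ?_, ?_, ?_, ?_, ?_⟩
        · show a ∈ _
          rw [Metric.mem_sphere, ← ha, e.dist_map]
        · show a' ∈ _
          rw [Metric.mem_sphere, ← ha', e.dist_map]
          exact ho₂AA'.symm
        · show c ∈ _
          rw [Metric.mem_sphere, ← hc, e.dist_map]
        · show c' ∈ _
          rw [Metric.mem_sphere, ← hc', e.dist_map, hC'C]
        · rintro ⟨b, d⟩ hmem
          exfalso
          obtain ⟨-, hrot, -⟩ := hsub ⟨b, d⟩ hmem
          obtain ⟨-, k2⟩ := hrot ρ o rfl hρ1 ho_def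
          rw [hoC] at k2
          simp only [dist_self] at k2
          have hdc : e.symm d = C := dist_eq_zero.mp k2
          exact hmem.1.2.1 (by rw [← e.apply_symm_apply d, hdc, hc])
      · -- main rotation case
        refine ⟨Metric.sphere (e o) (dist A o), Metric.sphere (e o) (dist C o),
          Or.inl ⟨e o, dist A o, dist C o, dist_pos.mpr (fun hh => hoA hh.symm),
            dist_pos.mpr (fun hh => hoC hh.symm), rfl, rfl⟩, ?_, ?_, ?_, ?_, ?_⟩
        · show a ∈ _
          rw [Metric.mem_sphere, ← ha, e.dist_map]
        · show a' ∈ _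
          rw [Metric.mem_sphere, ← ha', e.dist_map]
          exact hdA'o
        · show c ∈ _
          rw [Metric.mem_sphere, ← hc, e.dist_map]
        · show c' ∈ _
          rw [Metric.mem_sphere, ← hc', e.dist_map]
          exact hdC'o
        · rintro ⟨b, d⟩ hmem
          obtain ⟨hBD, hrot, -⟩ := hsub ⟨b, d⟩ hmem
          obtain ⟨k1, k2⟩ := hrot ρ o rfl hρ1 ho_def
          refine ⟨?_, ?_, ?_⟩
          · show b ∈ _
            rw [Metric.mem_sphere, ← e.apply_symm_apply b, e.dist_map]
            exact k1
          · show d ∈ _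
            rw [Metric.mem_sphere, ← e.apply_symm_apply d, e.dist_map]
            exact k2
          · show dist b d = δ
            rw [← e.apply_symm_apply b, ← e.apply_symm_apply d, e.dist_map, hBD, hdAC]
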